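/- Let m ≥ 2 and 1 ≤ p < ∞ be fixed and 1 ≤ j ≤ m. Then there exist positive constants A, B (depending only on p and m) such that for all k ≥ 1 and all s ∈ ℝ: A·(k^{p+m−1}|s|^p + k^{m−1}) ≤ Σ_{n ∈ ℕ^m, |n| = k} |s·n_j − 1|^p ≤ B·(k^{p+m−1}|s|^p + k^{m−1}). -/

import Mathlib

open Finset

/-- fiber cardinality -/
lemma fiber_card (d k t : ℕ) (j : Fin (d+1)) (ht : t ≤ k) :
    ((Finset.Nat.antidiagonalTuple (d+1) k).filter (fun n => n j = t)).card
      = (Finset.Nat.antidiagonalTuple d (k - t)).card := by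
  refine Finset.card_nbij' (i := fun n => j.removeNth n) (j := fun y => j.insertNth t y)
    ?_ ?_ ?_ ?_
  · intro n hn
    simp only [Finset.mem_coe, mem_filter, Finset.Nat.mem_antidiagonalTuple] at hn
    rw [Finset.mem_coe, Finset.Nat.mem_antidiagonalTuple]
    have := Fin.sum_univ_succAbove n j
    simp only [Fin.removeNth]
    omega
  · intro y hy
    rw [Finset.mem_coe, Finset.Nat.mem_antidiagonalTuple] at hy
    simp only [Finset.mem_coe, mem_filter, Finset.Nat.mem_antidiagonalTuple]
    rw [Fin.sum_univ_succAbove _ j]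
    simp only [Fin.insertNth_apply_same]
    constructor
    · have h2 : ∑ i : Fin d, (Fin.insertNth (α := fun _ => ℕ) j t y) (j.succAbove i) = ∑ i : Fin d, y i := by
        simp
      omega
    · trivial
  · intro n hn
    simp only [Finset.mem_coe, mem_filter] at hn
    rw [← hn.2]
    exact Fin.insertNth_self_removeNth j n
  · intro y _
    exact Fin.removeNth_insertNth (α := fun _ => ℕ) j t y

lemma coord_le (d k : ℕ) (j : Fin (d+1)) (n : Fin (d+1) → ℕ)
    (hn : n ∈ Finset.Nat.antidiagonalTuple (d+1) k) : n j ≤ k := by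
  rw [Finset.Nat.mem_antidiagonalTuple] at hn
  rw [← hn]
  exact Finset.single_le_sum (fun i _ => Nat.zero_le _) (mem_univ j)

/-- card splits into fibers over coordinate j -/
lemma card_adt_succ (d k : ℕ) (j : Fin (d+1)) :
    (Finset.Nat.antidiagonalTuple (d+1) k).card
      = ∑ t ∈ Finset.range (k+1), (Finset.Nat.antidiagonalTuple d (k - t)).card := by
  rw [Finset.card_eq_sum_card_fiberwise (f := fun n => n j) (t := Finset.range (k+1))
    (fun n hn => Finset.mem_range.2 (Nat.lt_succ_of_le (coord_le d k j n hn)))]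
  exact Finset.sum_congr rfl fun t ht => fiber_card d k t j (Nat.lt_succ_iff.1 (mem_range.1 ht))

lemma card_adt_le (d : ℕ) (hd : 1 ≤ d) (r : ℕ) :
    (Finset.Nat.antidiagonalTuple d r).card ≤ (r+1)^(d-1) := by
  induction d generalizing r with
  | zero => omega
  | succ d ih =>
    rcases Nat.eq_or_lt_of_le hd with h | h
    · rw [← h]
      simp [Finset.Nat.antidiagonalTuple_one]
    · have hd1 : 1 ≤ d := by omega
      rw [card_adt_succ d r 0]
      calc ∑ t ∈ Finset.range (r+1), (Finset.Nat.antidiagonalTuple d (r - t)).card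
          ≤ ∑ _t ∈ Finset.range (r+1), (r+1)^(d-1) := by
            refine Finset.sum_le_sum fun t _ => le_trans (ih hd1 (r - t)) ?_
            exact Nat.pow_le_pow_left (by omega) _
        _ = (r+1)^(d-1+1) := by rw [Finset.sum_const, Finset.card_range, smul_eq_mul, pow_succ']
        _ = (r+1)^(d+1-1) := by congr 1; omega

lemma card_adt_ge (d : ℕ) (hd : 1 ≤ d) (r : ℕ) :
    (r/d + 1)^(d-1) ≤ (Finset.Nat.antidiagonalTuple d r).card := by
  induction d generalizing r with
  | zero => omega
  | succ d ih =>
    rcases Nat.eq_or_lt_of_le hd with h | h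
    · rw [← h]
      simp [Finset.Nat.antidiagonalTuple_one]
    · have hd1 : 1 ≤ d := by omega
      rw [card_adt_succ d r 0]
      set q := r / (d+1) with hq
      have hqr : q ≤ r := Nat.div_le_self _ _
      calc (q+1)^(d+1-1) = ∑ _t ∈ Finset.range (q+1), (q+1)^(d-1+1-1) := by
            rw [Finset.sum_const, Finset.card_range, smul_eq_mul]
            rw [← pow_succ']
            congr 1 <;> omega
        _ ≤ ∑ t ∈ Finset.range (q+1), (Finset.Nat.antidiagonalTuple d (r - t)).card := by
            refine Finset.sum_le_sum fun t ht => ?_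
            have ht' : t ≤ q := Nat.lt_succ_iff.1 (mem_range.1 ht)
            refine le_trans ?_ (ih hd1 (r - t))
            have h1 : q * (d+1) ≤ r := Nat.div_mul_le_self r (d+1)
            rw [Nat.mul_succ] at h1
            have h2 : q ≤ (r - t)/d := (Nat.le_div_iff_mul_le (by omega)).2 (by omega)
            have h3 : d - 1 + 1 - 1 = d - 1 := by omega
            rw [h3]
            exact Nat.pow_le_pow_left (by omega) _
        _ ≤ ∑ t ∈ Finset.range (r+1), (Finset.Nat.antidiagonalTuple d (r - t)).card := by
            refine Finset.sum_le_sum_of_subset ?_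
            intro x hx
            simp only [mem_range] at *
            omega


section helpers2

/-- sum decomposition over fibers of coordinate j -/
lemma sum_decomp (d k : ℕ) (j : Fin (d+1)) (g : ℕ → ℝ) :
    ∑ n ∈ Finset.Nat.antidiagonalTuple (d+1) k, g (n j)
      = ∑ t ∈ Finset.range (k+1),
          ((Finset.Nat.antidiagonalTuple d (k-t)).card : ℝ) * g t := by
  rw [← Finset.sum_fiberwise_of_maps_to (g := fun n => n j) (t := Finset.range (k+1))
    (fun n hn => Finset.mem_range.2 (Nat.lt_succ_of_le (coord_le d k j n hn)))
    (fun n => g (n j))]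
  refine Finset.sum_congr rfl fun t ht => ?_
  have h1 : ∀ n ∈ (Finset.Nat.antidiagonalTuple (d+1) k).filter (fun n => n j = t),
      g (n j) = g t := fun n hn => by rw [(Finset.mem_filter.1 hn).2]
  rw [Finset.sum_congr rfl h1, Finset.sum_const, nsmul_eq_mul,
    fiber_card d k t j (Nat.lt_succ_iff.1 (Finset.mem_range.1 ht))]

lemma nc_real_ge (d : ℕ) (hd : 1 ≤ d) (r : ℕ) :
    (((r:ℝ)+1)/d)^(d-1) ≤ ((Finset.Nat.antidiagonalTuple d r).card : ℝ) := by
  have h1 := card_adt_ge d hd r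
  have hd0 : (0:ℝ) < d := by exact_mod_cast hd
  have h3 : r + 1 ≤ (r/d+1)*d := by
    have h4 := Nat.div_add_mod r d
    have h5 : r % d < d := Nat.mod_lt _ (by omega)
    have h6 : (r/d+1)*d = d*(r/d) + d := by ring
    omega
  have h2 : ((r:ℝ)+1)/d ≤ ((r/d + 1 : ℕ) : ℝ) := by
    rw [div_le_iff₀ hd0]
    calc ((r:ℝ)+1) = (((r+1 : ℕ)):ℝ) := by push_cast; ring
      _ ≤ (((r/d+1)*d : ℕ) : ℝ) := Nat.cast_le.2 h3
      _ = ((r/d + 1 : ℕ) : ℝ) * d := by push_cast; ring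
  calc (((r:ℝ)+1)/d)^(d-1) ≤ (((r/d + 1 : ℕ) : ℝ))^(d-1) :=
        pow_le_pow_left₀ (by positivity) h2 _
    _ = (((r/d + 1)^(d-1) : ℕ) : ℝ) := by push_cast; ring
    _ ≤ _ := Nat.cast_le.2 h1

lemma nc_real_le (d : ℕ) (hd : 1 ≤ d) (r : ℕ) :
    ((Finset.Nat.antidiagonalTuple d r).card : ℝ) ≤ ((r:ℝ)+1)^(d-1) := by
  calc ((Finset.Nat.antidiagonalTuple d r).card : ℝ) ≤ (((r+1)^(d-1) : ℕ) : ℝ) :=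
        Nat.cast_le.2 (card_adt_le d hd r)
    _ = ((r:ℝ)+1)^(d-1) := by push_cast; ring

lemma sum_lower (d k a b : ℕ) (hd : 1 ≤ d) (hab : a ≤ b) (hbk : b ≤ k)
    (f : ℕ → ℝ) (hf : ∀ t, 0 ≤ f t) (c : ℝ) (hc : 0 ≤ c)
    (hfc : ∀ t, a ≤ t → t ≤ b → c ≤ f t) :
    ((b - a + 1 : ℕ) : ℝ) * ((((k - b : ℕ):ℝ)+1)/d)^(d-1) * c
      ≤ ∑ t ∈ Finset.range (k+1),
          ((Finset.Nat.antidiagonalTuple d (k-t)).card : ℝ) * f t := by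
  have hd0 : (0:ℝ) < d := by exact_mod_cast hd
  have hsub : Finset.Icc a b ⊆ Finset.range (k+1) := by
    intro x hx
    simp only [Finset.mem_Icc, Finset.mem_range] at *
    omega
  refine le_trans ?_ (Finset.sum_le_sum_of_subset_of_nonneg hsub
    (fun t _ _ => mul_nonneg (Nat.cast_nonneg _) (hf t)))
  have key : ∀ t ∈ Finset.Icc a b,
      ((((k - b : ℕ):ℝ)+1)/d)^(d-1) * c
        ≤ ((Finset.Nat.antidiagonalTuple d (k-t)).card : ℝ) * f t := by
    intro t ht
    rw [Finset.mem_Icc] at ht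
    have hcast : ((k - b : ℕ):ℝ) ≤ ((k - t : ℕ):ℝ) := Nat.cast_le.2 (by omega)
    have h1 : ((((k - b : ℕ):ℝ)+1)/d)^(d-1) ≤ ((((k - t : ℕ):ℝ)+1)/d)^(d-1) :=
      pow_le_pow_left₀ (by positivity) (by gcongr) _
    have h2 := nc_real_ge d hd (k - t)
    exact mul_le_mul (h1.trans h2) (hfc t ht.1 ht.2) hc (Nat.cast_nonneg _)
  have hcard : (Finset.Icc a b).card = b - a + 1 := by rw [Nat.card_Icc]; omega
  calc ((b - a + 1 : ℕ) : ℝ) * ((((k - b : ℕ):ℝ)+1)/d)^(d-1) * c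
      = ∑ _t ∈ Finset.Icc a b, ((((k - b : ℕ):ℝ)+1)/d)^(d-1) * c := by
        rw [Finset.sum_const, hcard, nsmul_eq_mul, mul_assoc]
    _ ≤ ∑ t ∈ Finset.Icc a b,
          ((Finset.Nat.antidiagonalTuple d (k-t)).card : ℝ) * f t :=
        Finset.sum_le_sum key

end helpers2

lemma cast8 (k : ℕ) : ∀ x : ℕ, k ≤ 8 * x → (k:ℝ)/8 ≤ (x:ℝ) := by
  intro x h
  have := (Nat.cast_le (α := ℝ)).2 h
  push_cast at this
  linarith

lemma cast8' (k : ℕ) : ∀ x : ℕ, k ≤ 8 * x + 8 → (k:ℝ)/8 ≤ (x:ℝ) + 1 := by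
  intro x h
  have := (Nat.cast_le (α := ℝ)).2 h
  push_cast at this
  linarith

lemma final_chain (d e k : ℕ) (hde : d = e + 1) (hd0 : (0:ℝ) < d) (hk0 : (0:ℝ) < k)
    (x y cf Q : ℝ) (hx : (k:ℝ)/8 ≤ x) (hy : (k:ℝ)/8 ≤ y) (hcf : 0 ≤ cf) (hQ : 0 ≤ Q) :
    cf * ((1/8) * (1/(8*(d:ℝ)))^e) * ((k:ℝ)^d * Q) ≤ x * (y/(d:ℝ))^e * (cf * Q) := by
  have hdne : (d:ℝ) ≠ 0 := ne_of_gt hd0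
  have hx1 : ((k:ℝ)/8)/(d:ℝ) = (k:ℝ) * (1/(8*(d:ℝ))) := by field_simp
  have h1 : cf * ((1/8) * (1/(8*(d:ℝ)))^e) * ((k:ℝ)^d * Q)
      = (((k:ℝ)/8) * (((k:ℝ)/8)/(d:ℝ))^e) * (cf * Q) := by
    rw [hx1, hde, pow_succ, mul_pow]
    ring
  rw [h1]
  apply mul_le_mul_of_nonneg_right _ (by positivity)
  have h2 : (((k:ℝ)/8)/(d:ℝ))^e ≤ (y/(d:ℝ))^e := by gcongr
  exact mul_le_mul hx h2 (by positivity) (le_trans (by positivity) hx)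

set_option maxHeartbeats 2000000 in
theorem stmt7 (m : ℕ) (hm : 2 ≤ m) (p : ℝ) (hp1 : 1 ≤ p) (j : Fin m) :
    ∃ A B : ℝ, 0 < A ∧ 0 < B ∧ ∀ (k : ℕ), 1 ≤ k → ∀ s : ℝ,
      A * ((k : ℝ) ^ (p + m - 1) * |s| ^ p + (k : ℝ) ^ (m - 1 : ℝ)) ≤
        (∑ n ∈ Finset.Nat.antidiagonalTuple m k, |s * n j - 1| ^ p) ∧
      (∑ n ∈ Finset.Nat.antidiagonalTuple m k, |s * n j - 1| ^ p) ≤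
        B * ((k : ℝ) ^ (p + m - 1) * |s| ^ p + (k : ℝ) ^ (m - 1 : ℝ)) := by
  obtain ⟨d, rfl⟩ : ∃ d, m = d + 1 := ⟨m - 1, by omega⟩
  have hd : 1 ≤ d := by omega
  have hd0 : (0:ℝ) < d := by exact_mod_cast hd
  have hp0 : (0:ℝ) ≤ p := by linarith
  set e := d - 1 with he
  have hde : d = e + 1 := by omega
  set cf : ℝ := (1/2) * (1/4 : ℝ)^p with hcf
  have hq4p : (0:ℝ) < (1/4 : ℝ)^p := Real.rpow_pos_of_pos (by norm_num) p
  have hcf0 : 0 < cf := by rw [hcf]; positivity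
  refine ⟨cf * ((1/8) * (1/(8*(d:ℝ)))^e), (2:ℝ)^p * 2^(e+1), ?_, ?_, fun k hk s => ?_⟩
  · positivity
  · have h2p : (0:ℝ) < (2:ℝ)^p := Real.rpow_pos_of_pos (by norm_num) p
    positivity
  have hK1 : (1:ℝ) ≤ (k:ℝ) := by exact_mod_cast hk
  have hK0 : (0:ℝ) < (k:ℝ) := by linarith
  set u := |s| with hu
  have hu0 : 0 ≤ u := abs_nonneg s
  set Q : ℝ := ((k:ℝ)*u)^p + 1 with hQ
  have hQp0 : (0:ℝ) ≤ ((k:ℝ)*u)^p := Real.rpow_nonneg (by positivity) p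
  have hQ1 : (1:ℝ) ≤ Q := by rw [hQ]; linarith
  have hQ0 : (0:ℝ) < Q := by linarith
  -- rewrite the RHS expression
  have hexp1 : p + ((d+1 : ℕ):ℝ) - 1 = p + ((d:ℕ):ℝ) := by push_cast; ring
  have hexp2 : ((d+1 : ℕ):ℝ) - 1 = ((d:ℕ):ℝ) := by push_cast; ring
  have hrw : (k:ℝ) ^ (p + ((d+1:ℕ):ℝ) - 1) * u ^ p + (k:ℝ) ^ (((d+1:ℕ):ℝ) - 1)
      = (k:ℝ)^d * Q := by
    rw [hexp1, hexp2, Real.rpow_add hK0, Real.rpow_natCast, hQ,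
      Real.mul_rpow (le_of_lt hK0) hu0]
    ring
  have hsum := sum_decomp d k j (fun t => |s * (t:ℝ) - 1| ^ p)
  rw [hsum, hrw]
  have hf0 : ∀ t : ℕ, (0:ℝ) ≤ |s * (t:ℝ) - 1| ^ p :=
    fun t => Real.rpow_nonneg (abs_nonneg _) p
  set q := k / 4 with hqdef
  constructor
  · -- LOWER BOUND
    have hcfQ : (0:ℝ) ≤ cf * Q := by positivity
    rcases le_or_gt s 0 with hs | hs
    · -- case A : s ≤ 0, t ∈ [q+1, 2q+1]
      have hsu : s = -u := by rw [hu, abs_of_nonpos hs]; ring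
      refine le_trans ?_ (sum_lower d k (q+1) (2*q+1) hd (by omega) (by omega)
        (fun t => |s * (t:ℝ) - 1| ^ p) hf0 (cf * Q) hcfQ ?_)
      · rw [← he]
        exact final_chain d e k hde hd0 hK0 _ _ cf Q
          (cast8 k ((2*q+1) - (q+1) + 1) (by omega)) (cast8' k (k - (2*q+1)) (by omega))
          hcf0.le hQ0.le
      · intro t h1t h2t
        have hT4 : (k:ℝ) ≤ 4*(t:ℝ) := by exact_mod_cast (by omega : k ≤ 4*t)
        have hT0 : (0:ℝ) ≤ (t:ℝ) := Nat.cast_nonneg t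
        have habs : (1/4) * (1 + u*(k:ℝ)) ≤ |s * (t:ℝ) - 1| := by
          rw [hsu]
          have h5 : (-u) * (t:ℝ) - 1 ≤ 0 := by nlinarith
          rw [abs_of_nonpos h5]
          nlinarith [mul_le_mul_of_nonneg_left hT4 hu0]
        have hstep : ((1/4) * (1 + u*(k:ℝ)))^p ≤ |s * (t:ℝ) - 1| ^ p :=
          Real.rpow_le_rpow (by positivity) habs hp0
        have hsplit : ((1/4) * (1 + u*(k:ℝ)))^p = (1/4:ℝ)^p * (1 + u*(k:ℝ))^p :=
          Real.mul_rpow (by norm_num) (by positivity)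
        have hmax1 : (1:ℝ) ≤ (1 + u*(k:ℝ))^p := by
          calc (1:ℝ) = (1:ℝ)^p := (Real.one_rpow p).symm
            _ ≤ _ := Real.rpow_le_rpow (by norm_num) (by nlinarith) hp0
        have hmax2 : ((k:ℝ)*u)^p ≤ (1 + u*(k:ℝ))^p :=
          Real.rpow_le_rpow (by positivity) (by nlinarith) hp0
        have hQle : Q ≤ 2 * (1 + u*(k:ℝ))^p := by rw [hQ]; linarith
        calc cf * Q ≤ cf * (2*(1 + u*(k:ℝ))^p) := mul_le_mul_of_nonneg_left hQle hcf0.le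
          _ = (1/4:ℝ)^p * (1 + u*(k:ℝ))^p := by rw [hcf]; ring
          _ = ((1/4) * (1 + u*(k:ℝ)))^p := hsplit.symm
          _ ≤ _ := hstep
    · -- s > 0
      have hsu : u = s := by rw [hu, abs_of_pos hs]
      rcases le_or_gt (s * (k:ℝ)) 2 with hsk | hsk
      · -- case B1 : t ∈ [0, q]
        refine le_trans ?_ (sum_lower d k 0 q hd (by omega) (by omega)
          (fun t => |s * (t:ℝ) - 1| ^ p) hf0 (cf * Q) hcfQ ?_)
        · rw [← he]
          exact final_chain d e k hde hd0 hK0 _ _ cf Q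
            (cast8 k (q - 0 + 1) (by omega)) (cast8' k (k - q) (by omega))
            hcf0.le hQ0.le
        · intro t h1t h2t
          have hT4 : 4*(t:ℝ) ≤ (k:ℝ) := by exact_mod_cast (by omega : 4*t ≤ k)
          have hT0 : (0:ℝ) ≤ (t:ℝ) := Nat.cast_nonneg t
          have hst : s * (t:ℝ) ≤ 1/2 := by nlinarith
          have habs : (1/2:ℝ) ≤ |s * (t:ℝ) - 1| := by
            have h5 : s * (t:ℝ) - 1 ≤ 0 := by linarith
            rw [abs_of_nonpos h5]
            linarith
          have hstep : ((1/2):ℝ)^p ≤ |s * (t:ℝ) - 1| ^ p :=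
            Real.rpow_le_rpow (by norm_num) habs hp0
          have h2p1 : (1:ℝ) ≤ (2:ℝ)^p := by
            calc (1:ℝ) = (1:ℝ)^p := (Real.one_rpow p).symm
              _ ≤ _ := Real.rpow_le_rpow (by norm_num) (by norm_num) hp0
          have hQle : Q ≤ 2 * (2:ℝ)^p := by
            rw [hQ]
            have : ((k:ℝ)*u)^p ≤ (2:ℝ)^p :=
              Real.rpow_le_rpow (by positivity) (by rw [hsu]; nlinarith) hp0
            linarith
          have hhalf : (1/4:ℝ)^p * (2:ℝ)^p = ((1/2):ℝ)^p := by
            rw [← Real.mul_rpow (by norm_num) (by norm_num)]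
            norm_num
          calc cf * Q ≤ cf * (2 * (2:ℝ)^p) := mul_le_mul_of_nonneg_left hQle hcf0.le
            _ = (1/4:ℝ)^p * (2:ℝ)^p := by rw [hcf]; ring
            _ = ((1/2):ℝ)^p := hhalf
            _ ≤ _ := hstep
      · -- case B2 : t ∈ [k-q, k-q/2]
        refine le_trans ?_ (sum_lower d k (k-q) (k-q/2) hd (by omega) (by omega)
          (fun t => |s * (t:ℝ) - 1| ^ p) hf0 (cf * Q) hcfQ ?_)
        · rw [← he]
          exact final_chain d e k hde hd0 hK0 _ _ cf Q
            (cast8 k ((k - q/2) - (k - q) + 1) (by omega)) (cast8' k (k - (k - q/2)) (by omega))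
            hcf0.le hQ0.le
        · intro t h1t h2t
          have hT4 : 3*(k:ℝ) ≤ 4*(t:ℝ) := by exact_mod_cast (by omega : 3*k ≤ 4*t)
          have hT0 : (0:ℝ) ≤ (t:ℝ) := Nat.cast_nonneg t
          have hst : 1 + s*(k:ℝ)/4 ≤ s * (t:ℝ) := by nlinarith
          have habs : (1/4) * (s*(k:ℝ)) ≤ |s * (t:ℝ) - 1| := by
            have h5 : 0 ≤ s * (t:ℝ) - 1 := by nlinarith
            rw [abs_of_nonneg h5]
            nlinarith
          have hstep : ((1/4) * (s*(k:ℝ)))^p ≤ |s * (t:ℝ) - 1| ^ p :=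
            Real.rpow_le_rpow (by positivity) habs hp0
          have hsplit : ((1/4) * (s*(k:ℝ)))^p = (1/4:ℝ)^p * (s*(k:ℝ))^p :=
            Real.mul_rpow (by norm_num) (by positivity)
          have hone : (1:ℝ) ≤ (s*(k:ℝ))^p := by
            calc (1:ℝ) = (1:ℝ)^p := (Real.one_rpow p).symm
              _ ≤ _ := Real.rpow_le_rpow (by norm_num) (by nlinarith) hp0
          have hQle : Q ≤ 2 * (s*(k:ℝ))^p := by
            rw [hQ, hsu, mul_comm (k:ℝ) s]
            linarith
          calc cf * Q ≤ cf * (2 * (s*(k:ℝ))^p) := mul_le_mul_of_nonneg_left hQle hcf0.le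
            _ = (1/4:ℝ)^p * (s*(k:ℝ))^p := by rw [hcf]; ring
            _ = ((1/4) * (s*(k:ℝ)))^p := hsplit.symm
            _ ≤ _ := hstep
  · -- UPPER BOUND
    have h2p1 : (1:ℝ) ≤ (2:ℝ)^p := by
      calc (1:ℝ) = (1:ℝ)^p := (Real.one_rpow p).symm
        _ ≤ _ := Real.rpow_le_rpow (by norm_num) (by norm_num) hp0
    have hterm : ∀ t ∈ Finset.range (k+1),
        ((Finset.Nat.antidiagonalTuple d (k-t)).card : ℝ) * |s * (t:ℝ) - 1| ^ p
          ≤ ((k:ℝ)+1)^e * ((2:ℝ)^p * Q) := by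
      intro t ht
      have htk : (t:ℝ) ≤ (k:ℝ) := by
        exact_mod_cast Nat.lt_succ_iff.1 (Finset.mem_range.1 ht)
      have hT0 : (0:ℝ) ≤ (t:ℝ) := Nat.cast_nonneg t
      have h1 : ((Finset.Nat.antidiagonalTuple d (k-t)).card : ℝ) ≤ ((k:ℝ)+1)^e := by
        refine le_trans (nc_real_le d hd (k-t)) ?_
        rw [← he]
        apply pow_le_pow_left₀ (by positivity)
        have : ((k - t : ℕ):ℝ) ≤ (k:ℝ) := by exact_mod_cast Nat.sub_le k t
        linarith
      have habs : |s * (t:ℝ) - 1| ≤ (k:ℝ)*u + 1 := by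
        have hsa := le_abs_self s
        have hsb := neg_abs_le s
        rw [abs_le]
        constructor <;> nlinarith
      have h2 : |s * (t:ℝ) - 1| ^ p ≤ (2:ℝ)^p * Q := by
        have hst : |s * (t:ℝ) - 1| ^ p ≤ ((k:ℝ)*u + 1)^p :=
          Real.rpow_le_rpow (abs_nonneg _) habs hp0
        rcases le_total ((k:ℝ)*u) 1 with hcase | hcase
        · have : ((k:ℝ)*u + 1)^p ≤ (2:ℝ)^p :=
            Real.rpow_le_rpow (by positivity) (by linarith) hp0
          nlinarith
        · have hA2 : ((k:ℝ)*u + 1)^p ≤ (2*((k:ℝ)*u))^p :=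
            Real.rpow_le_rpow (by positivity) (by linarith) hp0
          have hB2 : (2*((k:ℝ)*u))^p = (2:ℝ)^p * ((k:ℝ)*u)^p :=
            Real.mul_rpow (by norm_num) (by positivity)
          have hC2 : ((k:ℝ)*u)^p ≤ Q := by rw [hQ]; linarith
          have h2p0 : (0:ℝ) ≤ (2:ℝ)^p := by linarith
          calc |s * (t:ℝ) - 1| ^ p ≤ (2*((k:ℝ)*u))^p := le_trans hst hA2
            _ = (2:ℝ)^p * ((k:ℝ)*u)^p := hB2
            _ ≤ (2:ℝ)^p * Q := mul_le_mul_of_nonneg_left hC2 h2p0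
      exact mul_le_mul h1 h2 (hf0 t) (by positivity)
    have hsumle := Finset.sum_le_sum hterm
    refine le_trans hsumle ?_
    rw [Finset.sum_const, Finset.card_range, nsmul_eq_mul, Nat.cast_add, Nat.cast_one]
    have hk1 : ((k:ℝ)+1) ≤ 2*(k:ℝ) := by linarith
    have hpow : ((k:ℝ)+1)^e ≤ 2^e * (k:ℝ)^e := by
      calc ((k:ℝ)+1)^e ≤ (2*(k:ℝ))^e := pow_le_pow_left₀ (by positivity) hk1 e
        _ = 2^e * (k:ℝ)^e := mul_pow 2 _ e
    have hkd : (k:ℝ)^d = (k:ℝ)^e * (k:ℝ) := by rw [hde, pow_succ]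
    have h2p0 : (0:ℝ) < (2:ℝ)^p := Real.rpow_pos_of_pos (by norm_num) p
    have hke : (0:ℝ) ≤ (k:ℝ)^e := by positivity
    calc ((k:ℝ)+1) * (((k:ℝ)+1)^e * ((2:ℝ)^p * Q))
        ≤ (2*(k:ℝ)) * ((2^e * (k:ℝ)^e) * ((2:ℝ)^p * Q)) := by
          apply mul_le_mul hk1 ?_ (by positivity) (by positivity)
          apply mul_le_mul_of_nonneg_right hpow (by positivity)
      _ = (2:ℝ)^p * 2^(e+1) * ((k:ℝ)^d * Q) := by rw [hkd]; ring
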